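/- arXiv:2511.12311 — 6 statements merged into one kernel-verified Lean document; each statement's English description precedes it below -/
import Mathlib

section
/- Let (V, σ) be a real symplectic vector space of dimension 2n, and let W₁, W₂, W₃ be Lagrangian subspaces with Wⱼ ∩ Wₖ = {0} for j ≠ k. Then there exists a symplectic basis (e₁,...,eₙ,f₁,...,fₙ) of V such that, in the corresponding coordinates (x⃗, p⃗), W₁ = {(x⃗, 0)}, W₂ = {(0, p⃗)}, and W₃ = {(x⃗, A x⃗) | x⃗ ∈ ℝⁿ} for some invertible symmetric matrix A ∈ GL(n, ℝ). -/
open Module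

/-- The symplectic orthogonal complement `W^⊥ = {f ∈ V | σ(f,g) = 0 for all g ∈ W}`. -/
def sympOrth {V : Type*} [AddCommGroup V] [Module ℝ V]
    (σ : V →ₗ[ℝ] V →ₗ[ℝ] ℝ) (W : Submodule ℝ V) : Submodule ℝ V where
  carrier := {f | ∀ g ∈ W, σ f g = 0}
  zero_mem' := by intro g hg; simp
  add_mem' := by intro a b ha hb g hg; simp [ha g hg, hb g hg]
  smul_mem' := by intro c a ha g hg; simp [ha g hg]

lemma mem_sympOrth {V : Type*} [AddCommGroup V] [Module ℝ V]
    (σ : V →ₗ[ℝ] V →ₗ[ℝ] ℝ) (W : Submodule ℝ V) (v : V) :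
    v ∈ sympOrth σ W ↔ ∀ g ∈ W, σ v g = 0 := Iff.rfl

lemma finrank_sympOrth_add {V : Type*} [AddCommGroup V] [Module ℝ V] [FiniteDimensional ℝ V]
    (σ : V →ₗ[ℝ] V →ₗ[ℝ] ℝ) (hnd : ∀ v, (∀ w, σ v w = 0) → v = 0)
    (W : Submodule ℝ V) :
    finrank ℝ (sympOrth σ W) + finrank ℝ W = finrank ℝ V := by
  have hinj : Function.Injective (σ : V →ₗ[ℝ] Module.Dual ℝ V) := by
    rw [← LinearMap.ker_eq_bot]
    ext v
    simp only [LinearMap.mem_ker, Submodule.mem_bot]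
    constructor
    · intro h; exact hnd v (fun w => by rw [h]; rfl)
    · intro h; simp [h]
  let eσ : V ≃ₗ[ℝ] Module.Dual ℝ V :=
    LinearMap.linearEquivOfInjective σ hinj (Subspace.dual_finrank_eq (V := V)).symm
  have heq : sympOrth σ W = W.dualAnnihilator.comap eσ.toLinearMap := by
    ext v
    simp only [mem_sympOrth, Submodule.mem_comap, LinearEquiv.coe_coe,
      Submodule.mem_dualAnnihilator]
    rfl
  rw [heq, Submodule.comap_equiv_eq_map_symm, LinearEquiv.finrank_map_eq]
  have h1 : finrank ℝ W.dualAnnihilator = finrank ℝ (V ⧸ W) :=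
    (LinearEquiv.finrank_eq (Subspace.quotEquivAnnihilator W)).symm
  rw [h1]
  exact Submodule.finrank_quotient_add_finrank W

/-- Given three pairwise transverse Lagrangian subspaces `W₁, W₂, W₃` of a `2n`-dimensional
real symplectic vector space `(V, σ)`, there is a symplectic basis `(e₁,…,eₙ,f₁,…,fₙ)` of
`V` in whose coordinates `W₁ = {(x⃗,0)}`, `W₂ = {(0,p⃗)}` and `W₃ = {(x⃗, A x⃗)}` for some
invertible symmetric matrix `A`. -/
theorem exists_symplectic_basis_three_lagrangians
    {V : Type*} [AddCommGroup V] [Module ℝ V] [FiniteDimensional ℝ V]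
    (n : ℕ) (hdim : finrank ℝ V = 2 * n)
    (σ : V →ₗ[ℝ] V →ₗ[ℝ] ℝ)
    (halt : ∀ v, σ v v = 0)
    (hnd : ∀ v, (∀ w, σ v w = 0) → v = 0)
    (W₁ W₂ W₃ : Submodule ℝ V)
    (hW₁ : W₁ = sympOrth σ W₁) (hW₂ : W₂ = sympOrth σ W₂) (hW₃ : W₃ = sympOrth σ W₃)
    (h12 : W₁ ⊓ W₂ = ⊥) (h13 : W₁ ⊓ W₃ = ⊥) (h23 : W₂ ⊓ W₃ = ⊥) :
    ∃ (e f : Fin n → V) (A : Matrix (Fin n) (Fin n) ℝ),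
      (∀ k l, σ (e k) (e l) = 0) ∧
      (∀ k l, σ (f k) (f l) = 0) ∧
      (∀ k l, σ (e k) (f l) = if k = l then 1 else 0) ∧
      Submodule.span ℝ (Set.range e ∪ Set.range f) = ⊤ ∧
      IsUnit A ∧ A.IsSymm ∧
      W₁ = Submodule.span ℝ (Set.range e) ∧
      W₂ = Submodule.span ℝ (Set.range f) ∧
      (↑W₃ : Set V) =
        {v : V | ∃ x : Fin n → ℝ, v = ∑ i, x i • e i + ∑ i, A.mulVec x i • f i} := by
  classical
  -- skew-symmetry
  have hskew : ∀ v w, σ v w = - σ w v := by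
    intro v w
    have h := halt (v + w)
    simp only [map_add, LinearMap.add_apply, halt] at h
    linarith
  -- Lagrangian inner vanishing
  have hL : ∀ (W : Submodule ℝ V), W = sympOrth σ W → ∀ v ∈ W, ∀ w ∈ W, σ v w = 0 := by
    intro W hW v hv w hw
    rw [hW] at hv
    exact hv w hw
  -- dimensions
  have hfr : ∀ (W : Submodule ℝ V), W = sympOrth σ W → finrank ℝ W = n := by
    intro W hW
    have := finrank_sympOrth_add σ hnd W
    rw [← hW, hdim] at this
    omega
  have hd1 : finrank ℝ W₁ = n := hfr W₁ hW₁
  have hd2 : finrank ℝ W₂ = n := hfr W₂ hW₂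
  have hd3 : finrank ℝ W₃ = n := hfr W₃ hW₃
  -- sups are top
  have hsup : ∀ (P Q : Submodule ℝ V), finrank ℝ P = n → finrank ℝ Q = n →
      P ⊓ Q = ⊥ → P ⊔ Q = ⊤ := by
    intro P Q hP hQ hPQ
    apply Submodule.eq_top_of_finrank_eq
    have := Submodule.finrank_sup_add_finrank_inf_eq P Q
    rw [hPQ, hP, hQ] at this
    simp only [finrank_bot, add_zero] at this
    rw [hdim]
    omega
  have h12t : W₁ ⊔ W₂ = ⊤ := hsup W₁ W₂ hd1 hd2 h12
  have h13t : W₁ ⊔ W₃ = ⊤ := hsup W₁ W₃ hd1 hd3 h13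
  have hcompl : IsCompl W₁ W₂ := ⟨disjoint_iff.mpr h12, codisjoint_iff.mpr h12t⟩
  -- a vector orthogonal to all of W₁ and all of W₂ is zero
  have hkill : ∀ v : V, (∀ x ∈ W₁, σ x v = 0) → (∀ y ∈ W₂, σ y v = 0) → v = 0 := by
    intro v h1 h2
    apply hnd v
    intro w
    have hw : w ∈ W₁ ⊔ W₂ := by rw [h12t]; trivial
    obtain ⟨a, ha, b, hb, rfl⟩ := Submodule.mem_sup.mp hw
    rw [hskew]
    rw [map_add, LinearMap.add_apply, h1 a ha, h2 b hb]
    ring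
  -- basis of W₁
  let b : Basis (Fin n) ℝ W₁ := (finBasis ℝ W₁).reindex (finCongr hd1)
  let e : Fin n → V := fun k => (b k : V)
  have hemem : ∀ k, e k ∈ W₁ := fun k => (b k).2
  -- pairing W₂ ≃ Dual W₁
  let p : W₂ →ₗ[ℝ] Module.Dual ℝ W₁ :=
    (W₁.subtype.dualMap) ∘ₗ σ.flip ∘ₗ W₂.subtype
  have hp_apply : ∀ (w : W₂) (x : W₁), p w x = σ (x : V) (w : V) := fun w x => rfl
  have hpinj : Function.Injective p := by
    rw [← LinearMap.ker_eq_bot]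
    apply (Submodule.eq_bot_iff _).mpr
    intro w hw
    simp only [LinearMap.mem_ker] at hw
    have h1 : ∀ x ∈ W₁, σ x (w : V) = 0 := by
      intro x hx
      have := congrArg (fun φ => φ ⟨x, hx⟩) hw
      simpa [hp_apply] using this
    have h2 : ∀ y ∈ W₂, σ y (w : V) = 0 := by
      intro y hy
      rw [hskew]
      rw [hL W₂ hW₂ (w : V) w.2 y hy]
      ring
    have : (w : V) = 0 := hkill _ h1 h2
    exact Subtype.ext this
  have hpd : finrank ℝ W₂ = finrank ℝ (Module.Dual ℝ W₁) := by
    rw [Subspace.dual_finrank_eq, hd1, hd2]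
  let pe : W₂ ≃ₗ[ℝ] Module.Dual ℝ W₁ := LinearMap.linearEquivOfInjective p hpinj hpd
  have hpe_apply : ∀ (w : W₂) (x : W₁), pe w x = σ (x : V) (w : V) := fun w x => rfl
  -- basis of W₂
  let c : Basis (Fin n) ℝ W₂ := b.dualBasis.map pe.symm
  let f : Fin n → V := fun l => (c l : V)
  have hfmem : ∀ l, f l ∈ W₂ := fun l => (c l).2
  have hef : ∀ k l, σ (e k) (f l) = if k = l then 1 else 0 := by
    intro k l
    have : pe (c l) = b.dualBasis l := by
      simp [c]
    have h2 := congrArg (fun φ => φ (b k)) this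
    rw [hpe_apply] at h2
    rw [show σ (e k) (f l) = σ ((b k : V)) ((c l : V)) from rfl, h2]
    rw [Basis.dualBasis_apply_self]
  have hee : ∀ k l, σ (e k) (e l) = 0 := fun k l =>
    hL W₁ hW₁ _ (hemem k) _ (hemem l)
  have hff : ∀ k l, σ (f k) (f l) = 0 := fun k l =>
    hL W₂ hW₂ _ (hfmem k) _ (hfmem l)
  -- spans
  have hspan_e : Submodule.span ℝ (Set.range e) = W₁ := by
    have : Set.range e = W₁.subtype '' Set.range b := by
      rw [← Set.range_comp]; rfl
    rw [this, ← Submodule.map_span, b.span_eq, Submodule.map_top, Submodule.range_subtype]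
  have hspan_f : Submodule.span ℝ (Set.range f) = W₂ := by
    have : Set.range f = W₂.subtype '' Set.range c := by
      rw [← Set.range_comp]; rfl
    rw [this, ← Submodule.map_span, c.span_eq, Submodule.map_top, Submodule.range_subtype]
  have hspan : Submodule.span ℝ (Set.range e ∪ Set.range f) = ⊤ := by
    rw [Submodule.span_union, hspan_e, hspan_f, h12t]
  -- uniqueness in W₂ via pairing with e
  have hkey : ∀ v ∈ W₂, (∀ k, σ (e k) v = 0) → v = 0 := by
    intro v hv h
    apply hkill
    · intro x hx
      rw [← hspan_e] at hx
      induction hx using Submodule.span_induction with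
      | mem y hy => obtain ⟨k, rfl⟩ := hy; exact h k
      | zero => simp
      | add y z _ _ hy hz => simp [map_add, LinearMap.add_apply, hy, hz]
      | smul a y _ hy => simp [map_smul, LinearMap.smul_apply, hy]
    · intro y hy
      rw [hskew, hL W₂ hW₂ v hv y hy]
      ring
  -- projections and the map T
  let π₁ : V →ₗ[ℝ] W₁ := W₁.linearProjOfIsCompl W₂ hcompl
  let π₂ : V →ₗ[ℝ] W₂ := W₂.linearProjOfIsCompl W₁ hcompl.symm
  have hππ : ∀ x : V, (π₁ x : V) + (π₂ x : V) = x := fun x =>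
    Submodule.projection_add_projection_eq_self hcompl x
  let q : W₃ →ₗ[ℝ] W₁ := π₁ ∘ₗ W₃.subtype
  let r : W₃ →ₗ[ℝ] W₂ := π₂ ∘ₗ W₃.subtype
  have hqr : ∀ w : W₃, (q w : V) + (r w : V) = (w : V) := fun w => hππ (w : V)
  have hqinj : Function.Injective q := by
    rw [← LinearMap.ker_eq_bot]
    apply (Submodule.eq_bot_iff _).mpr
    intro w hw
    simp only [LinearMap.mem_ker] at hw
    have h1 : (w : V) = (r w : V) := by
      have := hqr w
      rw [hw] at this
      simpa using this.symm
    have h2 : (w : V) ∈ W₂ ⊓ W₃ := ⟨h1 ▸ (r w).2, w.2⟩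
    rw [h23] at h2
    exact Subtype.ext (by simpa using h2)
  have hrinj : Function.Injective r := by
    rw [← LinearMap.ker_eq_bot]
    apply (Submodule.eq_bot_iff _).mpr
    intro w hw
    simp only [LinearMap.mem_ker] at hw
    have h1 : (w : V) = (q w : V) := by
      have := hqr w
      rw [hw] at this
      simpa using this.symm
    have h2 : (w : V) ∈ W₁ ⊓ W₃ := ⟨h1 ▸ (q w).2, w.2⟩
    rw [h13] at h2
    exact Subtype.ext (by simpa using h2)
  have hd31 : finrank ℝ W₃ = finrank ℝ W₁ := by rw [hd1, hd3]
  have hd12 : finrank ℝ W₁ = finrank ℝ W₂ := by rw [hd1, hd2]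
  let qe : W₃ ≃ₗ[ℝ] W₁ := LinearMap.linearEquivOfInjective q hqinj hd31
  let T : W₁ →ₗ[ℝ] W₂ := r ∘ₗ (qe.symm : W₁ ≃ₗ[ℝ] W₃).toLinearMap
  have hTinj : Function.Injective T := hrinj.comp qe.symm.injective
  -- decomposition of W₃ elements
  have hdec : ∀ u : W₁, ((qe.symm u : W₃) : V) = (u : V) + (T u : V) := by
    intro u
    have h1 : q (qe.symm u) = u := qe.apply_symm_apply u
    have := hqr (qe.symm u)
    rw [h1] at this
    rw [← this]
    rfl
  have hmem3 : ∀ w : W₃, (w : V) = (qe w : V) + (T (qe w) : V) := by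
    intro w
    have := hdec (qe w)
    rwa [qe.symm_apply_apply] at this
  -- the matrix A
  let A : Matrix (Fin n) (Fin n) ℝ := fun i j => σ (e i) ((T (b j) : V))
  -- T on basis vectors
  have hTb : ∀ j, (T (b j) : V) = ∑ i, A i j • f i := by
    intro j
    have hmem : (T (b j) : V) - ∑ i, A i j • f i ∈ W₂ := by
      apply Submodule.sub_mem _ (T (b j)).2
      exact Submodule.sum_mem _ (fun i _ => Submodule.smul_mem _ _ (hfmem i))
    have hz : (T (b j) : V) - ∑ i, A i j • f i = 0 := by
      apply hkey _ hmem
      intro k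
      rw [map_sub, map_sum]
      have : ∀ i, σ (e k) (A i j • f i) = A i j * (if k = i then 1 else 0) := by
        intro i
        rw [map_smul]
        simp [hef k i]
      simp only [this]
      rw [Finset.sum_mul_boole]
      simp [A]
    exact sub_eq_zero.mp hz
  -- T applied to coordinates
  have hcoe_sum : ∀ x : Fin n → ℝ, ((∑ i, x i • b i : W₁) : V) = ∑ i, x i • e i := by
    intro x
    push_cast
    rfl
  have hTsum : ∀ x : Fin n → ℝ, (T (∑ i, x i • b i) : V) = ∑ i, A.mulVec x i • f i := by
    intro x
    rw [map_sum]
    push_cast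
    simp only [map_smul]
    calc ∑ j, x j • ((T (b j) : V))
        = ∑ j, x j • (∑ i, A i j • f i) := by
          apply Finset.sum_congr rfl; intro j _; rw [hTb j]
      _ = ∑ j, ∑ i, (A i j * x j) • f i := by
          apply Finset.sum_congr rfl; intro j _
          rw [Finset.smul_sum]
          apply Finset.sum_congr rfl; intro i _
          rw [smul_smul, mul_comm]
      _ = ∑ i, ∑ j, (A i j * x j) • f i := Finset.sum_comm
      _ = ∑ i, A.mulVec x i • f i := by
          apply Finset.sum_congr rfl; intro i _
          rw [← Finset.sum_smul]
          rfl
  -- A = matrix of T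
  have hAmat : A = LinearMap.toMatrix b c T := by
    ext i j
    rw [LinearMap.toMatrix_apply]
    have : T (b j) = ∑ i, A i j • c i := by
      apply Subtype.ext
      rw [hTb j]
      push_cast
      rfl
    rw [this]
    rw [c.repr_sum_self]
  -- A is a unit
  have hTsurj : Function.Surjective T :=
    (LinearMap.injective_iff_surjective_of_finrank_eq_finrank hd12).mp hTinj
  let Te : W₁ ≃ₗ[ℝ] W₂ := LinearEquiv.ofBijective T ⟨hTinj, hTsurj⟩
  have hAunit : IsUnit A := by
    have h1 : LinearMap.toMatrix c b (Te.symm : W₂ →ₗ[ℝ] W₁) * A = 1 := by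
      rw [hAmat]
      have : (Te.symm : W₂ →ₗ[ℝ] W₁) ∘ₗ T = LinearMap.id := by
        ext u
        exact congrArg _ (Te.symm_apply_apply u)
      rw [← LinearMap.toMatrix_comp b c b, this, LinearMap.toMatrix_id]
    have h2 : A * LinearMap.toMatrix c b (Te.symm : W₂ →ₗ[ℝ] W₁) = 1 :=
      mul_eq_one_comm.mpr h1
    exact ⟨⟨A, _, h2, h1⟩, rfl⟩
  -- A is symmetric
  have hAsymm : A.IsSymm := by
    apply Matrix.IsSymm.ext
    intro i j
    -- show A j i = A i j
    have hw : ((qe.symm (b j) : W₃) : V) ∈ W₃ := (qe.symm (b j) : W₃).2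
    have hw' : ((qe.symm (b i) : W₃) : V) ∈ W₃ := (qe.symm (b i) : W₃).2
    have h0 : σ ((qe.symm (b j) : W₃) : V) ((qe.symm (b i) : W₃) : V) = 0 :=
      hL W₃ hW₃ _ hw _ hw'
    rw [hdec, hdec] at h0
    simp only [map_add, LinearMap.add_apply] at h0
    have he1 : σ ((b j : V)) ((b i : V)) = 0 := hee j i
    have he2 : σ ((T (b j) : V)) ((T (b i) : V)) = 0 :=
      hL W₂ hW₂ _ (T (b j)).2 _ (T (b i)).2
    have he3 : σ ((T (b j) : V)) ((b i : V)) = - σ ((b i : V)) ((T (b j) : V)) :=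
      hskew _ _
    rw [he1, he2, he3] at h0
    have : σ ((b j : V)) ((T (b i) : V)) = σ ((b i : V)) ((T (b j) : V)) := by linarith
    exact this
  refine ⟨e, f, A, hee, hff, hef, hspan, hAunit, hAsymm, hspan_e.symm, hspan_f.symm, ?_⟩
  ext v
  simp only [SetLike.mem_coe, Set.mem_setOf_eq]
  constructor
  · intro hv
    let w : W₃ := ⟨v, hv⟩
    refine ⟨fun i => b.repr (qe w) i, ?_⟩
    have hu : qe w = ∑ i, b.repr (qe w) i • b i := (b.sum_repr (qe w)).symm
    have := hmem3 w
    rw [hu] at this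
    rw [show v = (w : V) from rfl, this, hcoe_sum, hTsum]
  · rintro ⟨x, rfl⟩
    have := hdec (∑ i, x i • b i)
    rw [hcoe_sum, hTsum] at this
    rw [← this]
    exact (qe.symm (∑ i, x i • b i) : W₃).2
end

section
/- Let Q and P be self-adjoint operators on a separable Hilbert space satisfying the Weyl relation e^{isQ} e^{itP} = e^{-iℏst} e^{itP} e^{isQ} for all s,t ∈ ℝ (with the representation irreducible on H = L²(ℝ), the Schrödinger representation). For bounded Borel sets S, T ⊆ ℝ, the operator A := E_Q(S) E_P(T) (product of spectral projections) is Hilbert–Schmidt, and Tr(A*A) = Leb(S)·Leb(T)/(2πℏ). -/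
open MeasureTheory Real
open scoped ENNReal NNReal ComplexConjugate InnerProductSpace

noncomputable section

section helpers
variable {E : Type*} [NormedAddCommGroup E] [InnerProductSpace ℂ E]

lemma parseval_hasSum {ι : Type} (b : HilbertBasis ι ℂ E) (x : E) :
    HasSum (fun i => ‖⟪b i, x⟫_ℂ‖ ^ 2) (‖x‖ ^ 2) := by
  have h := (b.hasSum_inner_mul_inner x x).mapL Complex.reCLM
  simp only [Complex.reCLM_apply] at h
  have h1 : ∀ i, (⟪x, b i⟫_ℂ * ⟪b i, x⟫_ℂ).re = ‖⟪b i, x⟫_ℂ‖ ^ 2 := by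
    intro i
    rw [← inner_conj_symm (b i) x, RCLike.mul_conj, RCLike.norm_conj]
    norm_cast
  have h2 : (⟪x, x⟫_ℂ).re = ‖x‖ ^ 2 := by
    rw [inner_self_eq_norm_sq_to_K]; norm_cast
  simpa only [h1, h2] using h

lemma parseval_ennreal {ι : Type} (b : HilbertBasis ι ℂ E) (x : E) :
    ∑' i, (‖⟪b i, x⟫_ℂ‖₊ : ℝ≥0∞) ^ 2 = (‖x‖₊ : ℝ≥0∞) ^ 2 := by
  have h := parseval_hasSum b x
  have h1 : ∀ i, (‖⟪b i, x⟫_ℂ‖₊ : ℝ≥0∞) ^ 2 = ENNReal.ofReal (‖⟪b i, x⟫_ℂ‖ ^ 2) := by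
    intro i
    rw [ENNReal.ofReal_pow (norm_nonneg _), ofReal_norm, enorm_eq_nnnorm]
  have h2 : (‖x‖₊ : ℝ≥0∞) ^ 2 = ENNReal.ofReal (‖x‖ ^ 2) := by
    rw [ENNReal.ofReal_pow (norm_nonneg _), ofReal_norm, enorm_eq_nnnorm]
  simp only [h1, h2]
  rw [← ENNReal.ofReal_tsum_of_nonneg (fun i => sq_nonneg _) h.summable, h.tsum_eq]

lemma enorm_sq_eq {α : Type*} [MeasurableSpace α] {μ : Measure α} (f : Lp ℂ 2 μ)
    (h : α → ℂ) (hh : ⇑f =ᵐ[μ] h) :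
    (‖f‖₊ : ℝ≥0∞) ^ 2 = ∫⁻ a, (‖h a‖₊ : ℝ≥0∞) ^ 2 ∂μ := by
  rw [Lp.nnnorm_def, ENNReal.coe_toNNReal (Lp.eLpNorm_ne_top f),
    eLpNorm_congr_ae hh, eLpNorm_eq_lintegral_rpow_enorm_toReal two_ne_zero ENNReal.ofNat_ne_top]
  rw [ENNReal.toReal_ofNat, ← ENNReal.rpow_natCast _ 2, ← ENNReal.rpow_mul]
  norm_num
  rfl

lemma hilbertBasis_countable {ι : Type} [TopologicalSpace.SeparableSpace E]
    (b : HilbertBasis ι ℂ E) : Countable ι := by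
  have hb := b.orthonormal
  have hdist : ∀ i j : ι, i ≠ j → (1:ℝ) ≤ dist (b i) (b j) := by
    intro i j hij
    have h1 : ‖b i - b j‖ ^ 2 = 2 := by
      rw [@norm_sub_sq ℂ, hb.1 i, hb.1 j, hb.2 hij]
      norm_num
    have h2 : dist (b i) (b j) ^ 2 = 2 := by rw [dist_eq_norm]; exact h1
    nlinarith [dist_nonneg (x := b i) (y := b j)]
  have hdisj : (Set.univ : Set ι).PairwiseDisjoint
      (fun i => Metric.ball (b i) (1/2)) := by
    intro i _ j _ hij
    refine Metric.ball_disjoint_ball ?_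
    calc (1/2 : ℝ) + 1/2 = 1 := by norm_num
      _ ≤ _ := hdist i j hij
  have hcnt := hdisj.countable_of_isOpen (fun i _ => Metric.isOpen_ball)
    (fun i _ => Metric.nonempty_ball.2 (by norm_num))
  exact Set.countable_univ_iff.mp hcnt

end helpers

set_option maxHeartbeats 2000000 in
/-- Let `E_Q` be the spectral measure of position (multiplication by the indicator) and
`E_P` that of momentum `P = -iℏ d/dx` (conjugate of `E_Q` by the (physicists')
Fourier–Plancherel unitary `F`) in the Schrödinger representation on `L²(ℝ)`.
For bounded Borel sets `S, T ⊆ ℝ`, the operator `A := E_Q(S) E_P(T)` is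
Hilbert–Schmidt and `Tr(A*A) = Leb(S)·Leb(T)/(2πℏ)`. -/
theorem trace_EQ_EP_mul
    (ℏ : ℝ) (hℏ : 0 < ℏ)
    (S T : Set ℝ) (hSm : MeasurableSet S) (hTm : MeasurableSet T)
    (hSb : Bornology.IsBounded S) (hTb : Bornology.IsBounded T)
    (EQ EP : Set ℝ → (Lp ℂ 2 (volume : Measure ℝ) →L[ℂ] Lp ℂ 2 (volume : Measure ℝ)))
    (hEQ : ∀ U : Set ℝ, MeasurableSet U → ∀ f : Lp ℂ 2 (volume : Measure ℝ),
      ⇑(EQ U f) =ᵐ[volume] U.indicator ⇑f)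
    (F : Lp ℂ 2 (volume : Measure ℝ) ≃ₗᵢ[ℂ] Lp ℂ 2 (volume : Measure ℝ))
    (hF : ∀ f : Lp ℂ 2 (volume : Measure ℝ), Integrable ⇑f → ⇑(F f) =ᵐ[volume]
      fun p : ℝ => ((Real.sqrt (2 * π * ℏ) : ℂ))⁻¹ *
        ∫ x : ℝ, Complex.exp (-(Complex.I * (p : ℂ) * (x : ℂ)) / (ℏ : ℂ)) * f x)
    (hEP : ∀ U : Set ℝ, MeasurableSet U → ∀ f : Lp ℂ 2 (volume : Measure ℝ),
      ⇑(F (EP U f)) =ᵐ[volume] U.indicator ⇑(F f)) :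
    ∀ {ι : Type} (b : HilbertBasis ι ℂ (Lp ℂ 2 (volume : Measure ℝ))),
      Summable (fun i => ‖((EQ S).comp (EP T)) (b i)‖ ^ 2) ∧
      ∑' i, ‖((EQ S).comp (EP T)) (b i)‖ ^ 2
        = (volume S).toReal * (volume T).toReal / (2 * π * ℏ) := by
  intro ι b
  have h2πℏ : 0 < 2 * π * ℏ := by positivity
  have hS : volume S < ∞ := hSb.measure_lt_top
  have hT : volume T < ∞ := hTb.measure_lt_top
  -- symmetry of EQ U
  have symEQ : ∀ (U : Set ℝ) (hU : MeasurableSet U) (f g : Lp ℂ 2 (volume : Measure ℝ)),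
      ⟪EQ U f, g⟫_ℂ = ⟪f, EQ U g⟫_ℂ := by
    intro U hU f g
    rw [L2.inner_def, L2.inner_def]
    refine integral_congr_ae ?_
    filter_upwards [hEQ U hU f, hEQ U hU g] with a h1 h2
    rw [h1, h2]
    simp only [RCLike.inner_apply]
    by_cases ha : a ∈ U <;>
      simp [Set.indicator_of_mem, Set.indicator_of_notMem, ha]
  -- symmetry of EP U
  have symEP : ∀ (U : Set ℝ) (hU : MeasurableSet U) (f g : Lp ℂ 2 (volume : Measure ℝ)),
      ⟪EP U f, g⟫_ℂ = ⟪f, EP U g⟫_ℂ := by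
    intro U hU f g
    rw [← F.inner_map_map (EP U f) g, ← F.inner_map_map f (EP U g),
      L2.inner_def, L2.inner_def]
    refine integral_congr_ae ?_
    filter_upwards [hEP U hU f, hEP U hU g] with a h1 h2
    rw [h1, h2]
    simp only [RCLike.inner_apply]
    by_cases ha : a ∈ U <;>
      simp [Set.indicator_of_mem, Set.indicator_of_notMem, ha]
  set B : Lp ℂ 2 (volume : Measure ℝ) → Lp ℂ 2 (volume : Measure ℝ) :=
    fun g => EP T (EQ S g) with hBdef
  have hadj : ∀ f g : Lp ℂ 2 (volume : Measure ℝ),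
      ⟪((EQ S).comp (EP T)) f, g⟫_ℂ = ⟪f, B g⟫_ℂ := by
    intro f g
    rw [ContinuousLinearMap.comp_apply, symEQ S hSm, symEP T hTm]
  -- the family e p
  set φ : ℝ → ℝ → ℂ :=
    fun p => S.indicator fun x : ℝ => Complex.exp (Complex.I * p * x / ℏ) with hφdef
  have hφre : ∀ p x : ℝ, (Complex.I * p * x / (ℏ:ℂ)).re = 0 := by
    intro p x
    simp [Complex.div_re]
  have hφmem : ∀ p : ℝ, MemLp (φ p) 2 (volume : Measure ℝ) := by
    intro p
    constructor
    · exact (Continuous.aestronglyMeasurable (by continuity)).indicator hSm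
    · refine lt_of_le_of_lt (eLpNorm_mono (g := S.indicator fun _ : ℝ => (1:ℝ)) ?_) ?_
      · intro x
        by_cases hx : x ∈ S <;>
          simp [hφdef, Set.indicator_of_mem, Set.indicator_of_notMem, hx,
            Complex.norm_exp, hφre]
      · rw [eLpNorm_indicator_const hSm two_ne_zero ENNReal.ofNat_ne_top]
        exact ENNReal.mul_lt_top (by simp) (ENNReal.rpow_lt_top_of_nonneg (by norm_num) hS.ne)
  set e : ℝ → Lp ℂ 2 (volume : Measure ℝ) := fun p => (hφmem p).toLp (φ p) with hedef
  -- inner products with e p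
  have hinner : ∀ (p : ℝ) (g : Lp ℂ 2 (volume : Measure ℝ)),
      ⟪e p, g⟫_ℂ = ∫ x : ℝ, Complex.exp (-(Complex.I * (p : ℂ) * (x : ℂ)) / (ℏ : ℂ)) *
        (S.indicator ⇑g) x := by
    intro p g
    rw [L2.inner_def]
    refine integral_congr_ae ?_
    filter_upwards [(hφmem p).coeFn_toLp] with x h1
    rw [RCLike.inner_apply, h1]
    by_cases hx : x ∈ S
    · simp only [hφdef, Set.indicator_of_mem hx]
      rw [← Complex.exp_conj]
      have hc : (starRingEnd ℂ) (Complex.I * p * x / ℏ) = -(Complex.I * p * x) / (ℏ:ℂ) := by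
        simp only [map_div₀, map_mul, Complex.conj_I, Complex.conj_ofReal]
        ring
      rw [hc, mul_comm]
    · simp [hφdef, Set.indicator_of_notMem hx]
  -- norm of e p
  have hnorme : ∀ p : ℝ, (‖e p‖₊ : ℝ≥0∞) ^ 2 = volume S := by
    intro p
    rw [enorm_sq_eq (e p) (φ p) (hφmem p).coeFn_toLp]
    have : ∀ x, (‖φ p x‖₊ : ℝ≥0∞) ^ 2 = S.indicator (fun _ => (1:ℝ≥0∞)) x := by
      intro x
      by_cases hx : x ∈ S
      · have hn : ‖Complex.exp (Complex.I * p * x / ℏ)‖ = 1 := by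
          rw [Complex.norm_exp, hφre, Real.exp_zero]
        simp only [hφdef, Set.indicator_of_mem hx, ← enorm_eq_nnnorm, ← ofReal_norm, hn]
        simp
      · simp [hφdef, Set.indicator_of_notMem hx]
    simp only [this]
    rw [lintegral_indicator hSm]
    simp
  -- integrability of EQ S g
  have hint : ∀ g : Lp ℂ 2 (volume : Measure ℝ), Integrable ⇑(EQ S g) := by
    intro g
    haveI : Fact (volume S < ∞) := ⟨hS⟩
    have h1 : IntegrableOn (⇑g) S volume := ((Lp.memLp g).restrict S).integrable one_le_two
    have h2 : Integrable (S.indicator ⇑g) volume := (integrable_indicator_iff hSm).2 h1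
    exact h2.congr (hEQ S hSm g).symm
  -- the Fourier side of B g
  have hFeq : ∀ g : Lp ℂ 2 (volume : Measure ℝ), ⇑(F (B g)) =ᵐ[volume]
      T.indicator (fun p => ((Real.sqrt (2*π*ℏ) : ℂ))⁻¹ * ⟪e p, g⟫_ℂ) := by
    intro g
    have h2 := hF (EQ S g) (hint g)
    have h3 : ∀ p : ℝ, (∫ x : ℝ, Complex.exp (-(Complex.I * (p:ℂ) * (x:ℂ)) / (ℏ:ℂ)) *
        (EQ S g) x) = ⟪e p, g⟫_ℂ := by
      intro p
      rw [hinner p g]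
      refine integral_congr_ae ?_
      filter_upwards [hEQ S hSm g] with x hx
      rw [hx]
    have h2' : ⇑(F (EQ S g)) =ᵐ[volume]
        (fun p => ((Real.sqrt (2*π*ℏ) : ℂ))⁻¹ * ⟪e p, g⟫_ℂ) := by
      refine h2.trans (Filter.Eventually.of_forall fun p => ?_)
      dsimp only
      rw [h3 p]
    refine (hEP T hTm (EQ S g)).trans ?_
    filter_upwards [h2'] with p hp
    by_cases hpT : p ∈ T <;>
      simp [Set.indicator_of_mem, Set.indicator_of_notMem, hpT, hp]
  -- the HS-norm of B g
  have hc : (‖((Real.sqrt (2*π*ℏ) : ℂ))⁻¹‖₊ : ℝ≥0∞) ^ 2 = ENNReal.ofReal (2*π*ℏ)⁻¹ := by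
    rw [← enorm_eq_nnnorm, ← ofReal_norm, ← ENNReal.ofReal_pow (norm_nonneg _)]
    congr 1
    rw [norm_inv, Complex.norm_real, Real.norm_eq_abs,
      abs_of_nonneg (Real.sqrt_nonneg _), inv_pow, Real.sq_sqrt h2πℏ.le]
  have hBnorm : ∀ g : Lp ℂ 2 (volume : Measure ℝ), (‖B g‖₊ : ℝ≥0∞) ^ 2
      = ENNReal.ofReal (2*π*ℏ)⁻¹ * ∫⁻ p in T, (‖⟪e p, g⟫_ℂ‖₊ : ℝ≥0∞) ^ 2 := by
    intro g
    have h0 : (‖B g‖₊ : ℝ≥0∞) = (‖F (B g)‖₊ : ℝ≥0∞) := by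
      rw [F.nnnorm_map]
    rw [h0, enorm_sq_eq (F (B g)) _ (hFeq g)]
    have hind : ∀ p : ℝ, (‖T.indicator
          (fun p => ((Real.sqrt (2*π*ℏ) : ℂ))⁻¹ * ⟪e p, g⟫_ℂ) p‖₊ : ℝ≥0∞) ^ 2
        = T.indicator (fun p => ENNReal.ofReal (2*π*ℏ)⁻¹ * (‖⟪e p, g⟫_ℂ‖₊ : ℝ≥0∞) ^ 2) p := by
      intro p
      by_cases hp : p ∈ T
      · simp only [Set.indicator_of_mem hp]
        rw [nnnorm_mul, ENNReal.coe_mul, mul_pow, hc]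
      · simp [Set.indicator_of_notMem hp]
    simp only [hind]
    rw [lintegral_indicator hTm, lintegral_const_mul' _ _ ENNReal.ofReal_ne_top]
  -- measurability
  have hmeas : ∀ g : Lp ℂ 2 (volume : Measure ℝ),
      Measurable fun p : ℝ => (‖⟪e p, g⟫_ℂ‖₊ : ℝ≥0∞) ^ 2 := by
    intro g
    have hK : StronglyMeasurable fun q : ℝ × ℝ =>
        Complex.exp (-(Complex.I * (q.1:ℂ) * (q.2:ℂ)) / (ℏ:ℂ)) * (S.indicator ⇑g) q.2 := by
      refine StronglyMeasurable.mul (Continuous.stronglyMeasurable (by continuity)) ?_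
      exact ((Lp.stronglyMeasurable g).indicator hSm).comp_measurable measurable_snd
    have h1 : StronglyMeasurable fun p : ℝ =>
        ∫ x : ℝ, Complex.exp (-(Complex.I * (p:ℂ) * (x:ℂ)) / (ℏ:ℂ)) * (S.indicator ⇑g) x :=
      hK.integral_prod_right'
    have h2 : (fun p : ℝ => ⟪e p, g⟫_ℂ) = fun p : ℝ =>
        ∫ x : ℝ, Complex.exp (-(Complex.I * (p:ℂ) * (x:ℂ)) / (ℏ:ℂ)) * (S.indicator ⇑g) x :=
      funext fun p => hinner p g
    have h3 : Measurable fun p : ℝ => ⟪e p, g⟫_ℂ := by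
      rw [h2]; exact h1.measurable
    exact (h3.nnnorm.coe_nnreal_ennreal.pow_const 2)
  -- the key identity in ℝ≥0∞
  haveI : Fact ((2:ℝ≥0∞) ≠ ∞) := ⟨ENNReal.ofNat_ne_top⟩
  haveI : Countable ι := hilbertBasis_countable b
  set A := (EQ S).comp (EP T) with hA
  have key : ∑' i, (‖A (b i)‖₊ : ℝ≥0∞) ^ 2
      = ENNReal.ofReal (2*π*ℏ)⁻¹ * (volume S * volume T) := by
    calc ∑' i, (‖A (b i)‖₊ : ℝ≥0∞) ^ 2
        = ∑' i, ∑' j, (‖⟪b j, A (b i)⟫_ℂ‖₊ : ℝ≥0∞) ^ 2 :=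
          tsum_congr fun i => (parseval_ennreal b _).symm
      _ = ∑' j, ∑' i, (‖⟪b j, A (b i)⟫_ℂ‖₊ : ℝ≥0∞) ^ 2 := ENNReal.tsum_comm
      _ = ∑' j, ∑' i, (‖⟪b i, B (b j)⟫_ℂ‖₊ : ℝ≥0∞) ^ 2 := by
          refine tsum_congr fun j => tsum_congr fun i => ?_
          have hn : ‖⟪b j, A (b i)⟫_ℂ‖ = ‖⟪b i, B (b j)⟫_ℂ‖ := by
            rw [norm_inner_symm, hadj]
          have hn' : ‖⟪b j, A (b i)⟫_ℂ‖₊ = ‖⟪b i, B (b j)⟫_ℂ‖₊ := by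
            ext; exact hn
          rw [hn']
      _ = ∑' j, (‖B (b j)‖₊ : ℝ≥0∞) ^ 2 := tsum_congr fun j => parseval_ennreal b _
      _ = ∑' j, (ENNReal.ofReal (2*π*ℏ)⁻¹ * ∫⁻ p in T, (‖⟪e p, b j⟫_ℂ‖₊ : ℝ≥0∞) ^ 2) :=
          tsum_congr fun j => hBnorm _
      _ = ENNReal.ofReal (2*π*ℏ)⁻¹ * ∑' j, ∫⁻ p in T, (‖⟪e p, b j⟫_ℂ‖₊ : ℝ≥0∞) ^ 2 :=
          ENNReal.tsum_mul_left
      _ = ENNReal.ofReal (2*π*ℏ)⁻¹ * ∫⁻ p in T, ∑' j, (‖⟪e p, b j⟫_ℂ‖₊ : ℝ≥0∞) ^ 2 := by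
          rw [← lintegral_tsum fun j => (hmeas (b j)).aemeasurable]
      _ = ENNReal.ofReal (2*π*ℏ)⁻¹ * ∫⁻ _ in T, volume S := by
          congr 1
          refine lintegral_congr fun p => ?_
          have : ∀ j : ι, (‖⟪e p, b j⟫_ℂ‖₊ : ℝ≥0∞) ^ 2 = (‖⟪b j, e p⟫_ℂ‖₊ : ℝ≥0∞) ^ 2 := by
            intro j
            have hn : ‖⟪e p, b j⟫_ℂ‖₊ = ‖⟪b j, e p⟫_ℂ‖₊ := by ext; exact norm_inner_symm _ _
            rw [hn]
          simp only [this]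
          rw [parseval_ennreal b (e p), hnorme p]
      _ = ENNReal.ofReal (2*π*ℏ)⁻¹ * (volume S * volume T) := by
          rw [setLIntegral_const]
  -- conclude
  have hcoe : ∀ i, ((‖A (b i)‖₊ ^ 2 : ℝ≥0) : ℝ≥0∞) = (‖A (b i)‖₊ : ℝ≥0∞) ^ 2 := fun i => by
    push_cast; ring
  have hfin : (∑' i, ((‖A (b i)‖₊ ^ 2 : ℝ≥0) : ℝ≥0∞)) ≠ ∞ := by
    simp only [hcoe]
    rw [key]
    exact (ENNReal.mul_lt_top (by simp) (ENNReal.mul_lt_top hS hT)).ne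
  have hsum : Summable fun i => (‖A (b i)‖₊ ^ 2 : ℝ≥0) :=
    ENNReal.tsum_coe_ne_top_iff_summable.1 hfin
  have hfuneq : (fun i => ‖A (b i)‖ ^ 2) = fun i => ((‖A (b i)‖₊ ^ 2 : ℝ≥0) : ℝ) := by
    funext i; push_cast; ring
  constructor
  · rw [hfuneq]
    exact NNReal.summable_coe.2 hsum
  · have h1 : ∑' i, ‖A (b i)‖ ^ 2 = ((∑' i, (‖A (b i)‖₊ ^ 2 : ℝ≥0) : ℝ≥0) : ℝ) := by
      rw [hfuneq, NNReal.coe_tsum]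
    have h2 : ((∑' i, (‖A (b i)‖₊ ^ 2 : ℝ≥0) : ℝ≥0) : ℝ≥0∞)
        = ENNReal.ofReal (2*π*ℏ)⁻¹ * (volume S * volume T) := by
      rw [ENNReal.coe_tsum hsum]
      simp only [hcoe]
      exact key
    have h3 : ((∑' i, (‖A (b i)‖₊ ^ 2 : ℝ≥0) : ℝ≥0) : ℝ)
        = (ENNReal.ofReal (2*π*ℏ)⁻¹ * (volume S * volume T)).toReal := by
      rw [← h2]; simp
    rw [h1, h3, ENNReal.toReal_mul, ENNReal.toReal_mul,
      ENNReal.toReal_ofReal (inv_nonneg.2 h2πℏ.le)]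
    field_simp
end
end

section
/- Let K(x'',x';T) = (m/(2πiℏT))^{1/2} exp[(im/(2ℏT))(x''−x')²] be the free-particle propagator. Define K₃(x₁,x₂,x₃;t₁,t₂,t₃) := K(x₁,x₂;t₂−t₁)·K(x₂,x₃;t₃−t₂)·K(x₃,x₁;t₁−t₃) for pairwise distinct times. Then K₃ = (m³/((2πiℏ)³ T₂₁T₃₂T₁₃))^{1/2} exp[−(im/(2ℏ)) (x₁T₃₂ + x₂T₁₃ + x₃T₂₁)²/(T₂₁T₃₂T₁₃)], where T_{kl} := t_k − t_l. In particular, since x₁T₃₂ + x₂T₁₃ + x₃T₂₁ equals twice the signed area of the triangle with vertices (x_k, t_k), K₃ is invariant under Galilean transformations (x,t) ↦ (x + vt + x₀, t + t₀). -/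
open Real

/-- The free-particle propagator `K(x'',x';T) = (m/(2πiℏT))^{1/2} e^{(im/(2ℏT))(x''−x')²}`. -/
noncomputable def Kfree (m ℏ : ℝ) (x'' x' T : ℝ) : ℂ :=
  ((m : ℂ) / (2 * (π : ℂ) * Complex.I * (ℏ : ℂ) * (T : ℂ))) ^ ((1 : ℂ) / 2) *
    Complex.exp (Complex.I * (m : ℂ) / (2 * (ℏ : ℂ) * (T : ℂ)) * ((x'' : ℂ) - (x' : ℂ)) ^ 2)

/-- `K₃(x₁,x₂,x₃;t₁,t₂,t₃) := K(x₁,x₂;t₂−t₁)·K(x₂,x₃;t₃−t₂)·K(x₃,x₁;t₁−t₃)`. -/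
noncomputable def K3free (m ℏ : ℝ) (x₁ x₂ x₃ t₁ t₂ t₃ : ℝ) : ℂ :=
  Kfree m ℏ x₁ x₂ (t₂ - t₁) * Kfree m ℏ x₂ x₃ (t₃ - t₂) * Kfree m ℏ x₃ x₁ (t₁ - t₃)

lemma log_real_mul_I (r : ℝ) (hr : r ≠ 0) :
    Complex.log ((r : ℂ) * Complex.I) =
      (Real.log |r| : ℂ) + ((if 0 < r then (π/2 : ℝ) else (-(π/2) : ℝ)) : ℂ) * Complex.I := by
  have hz : ((r:ℂ) * Complex.I) ≠ 0 := by
    simp [Complex.ext_iff, hr]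
  rw [Complex.log]
  have habs : ‖(r:ℂ) * Complex.I‖ = |r| := by
    simp [Complex.norm_def, Complex.normSq_apply]
  have harg : Complex.arg ((r:ℂ) * Complex.I) = if 0 < r then (π/2 : ℝ) else (-(π/2) : ℝ) := by
    rcases lt_trichotomy r 0 with h|h|h
    · rw [if_neg (not_lt.2 h.le)]
      have : (r:ℂ) * Complex.I = (-r : ℝ) * (-Complex.I) := by push_cast; ring
      rw [this, Complex.arg_real_mul _ (by linarith), Complex.arg_neg_I]
    · exact absurd h hr
    · rw [if_pos h, Complex.arg_real_mul _ h, Complex.arg_I]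
  rw [habs, harg]; split <;> simp


set_option maxHeartbeats 2000000 in
lemma K3free_eq
    (m ℏ : ℝ) (hm : 0 < m) (hℏ : 0 < ℏ)
    (x₁ x₂ x₃ t₁ t₂ t₃ : ℝ)
    (h12 : t₁ ≠ t₂) (h23 : t₂ ≠ t₃) (h13 : t₁ ≠ t₃) :
    K3free m ℏ x₁ x₂ x₃ t₁ t₂ t₃
      = ((m : ℂ) ^ 3 / ((2 * (π : ℂ) * Complex.I * (ℏ : ℂ)) ^ 3 *
            ((t₂ - t₁ : ℝ) : ℂ) * ((t₃ - t₂ : ℝ) : ℂ) * ((t₁ - t₃ : ℝ) : ℂ))) ^ ((1 : ℂ) / 2) *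
        Complex.exp (-(Complex.I * (m : ℂ) / (2 * (ℏ : ℂ))) *
          (((x₁ * (t₃ - t₂) + x₂ * (t₁ - t₃) + x₃ * (t₂ - t₁) : ℝ) : ℂ)) ^ 2 /
          (((t₂ - t₁ : ℝ) : ℂ) * ((t₃ - t₂ : ℝ) : ℂ) * ((t₁ - t₃ : ℝ) : ℂ))) := by
  have hπ : (0:ℝ) < π := Real.pi_pos
  -- generic facts
  have hden : ∀ T : ℝ, T ≠ 0 → 2*π*ℏ*T ≠ 0 := fun T hT =>
    mul_ne_zero (mul_ne_zero (mul_ne_zero two_ne_zero hπ.ne') hℏ.ne') hT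
  have hsneg : ∀ T : ℝ, 0 < T → -(m/(2*π*ℏ*T)) < 0 := by
    intro T hT; have : 0 < m/(2*π*ℏ*T) := by positivity
    linarith
  have hspos : ∀ T : ℝ, T < 0 → 0 < -(m/(2*π*ℏ*T)) := by
    intro T hT
    have hd : 2*π*ℏ*T < 0 := by
      have := mul_pos (mul_pos (by norm_num : (0:ℝ) < 2) hπ) hℏ
      nlinarith
    have h2 : m/(2*π*ℏ*T) < 0 := div_neg_of_pos_of_neg hm hd
    linarith
  have hbase : ∀ T : ℝ, T ≠ 0 →
      ((m:ℂ) / (2 * (π:ℂ) * Complex.I * (ℏ:ℂ) * (T:ℂ))) = ((-(m/(2*π*ℏ*T)) : ℝ) : ℂ) * Complex.I := by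
    intro T hT
    have hπ' : (π:ℂ) ≠ 0 := Complex.ofReal_ne_zero.2 hπ.ne'
    have hℏ' : (ℏ:ℂ) ≠ 0 := Complex.ofReal_ne_zero.2 hℏ.ne'
    have hT' : (T:ℂ) ≠ 0 := Complex.ofReal_ne_zero.2 hT
    push_cast
    field_simp
    ring_nf
    simp [Complex.I_sq]
  unfold K3free Kfree
  set A := t₂ - t₁ with hAdef
  set B := t₃ - t₂ with hBdef
  set C := t₁ - t₃ with hCdef
  have hA : A ≠ 0 := sub_ne_zero.2 (Ne.symm h12)
  have hB : B ≠ 0 := sub_ne_zero.2 (Ne.symm h23)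
  have hC : C ≠ 0 := sub_ne_zero.2 h13
  have hABC : A + B + C = 0 := by rw [hAdef, hBdef, hCdef]; ring
  set rA : ℝ := -(m/(2*π*ℏ*A)) with hrAdef
  set rB : ℝ := -(m/(2*π*ℏ*B)) with hrBdef
  set rC : ℝ := -(m/(2*π*ℏ*C)) with hrCdef
  set R : ℝ := -(rA*rB*rC) with hRdef
  have hrA : rA ≠ 0 := hrAdef ▸ neg_ne_zero.2 (div_ne_zero hm.ne' (hden A hA))
  have hrB : rB ≠ 0 := hrBdef ▸ neg_ne_zero.2 (div_ne_zero hm.ne' (hden B hB))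
  have hrC : rC ≠ 0 := hrCdef ▸ neg_ne_zero.2 (div_ne_zero hm.ne' (hden C hC))
  have hR : R ≠ 0 := by rw [hRdef]; simp [hrA, hrB, hrC]
  have hApos : A < 0 → 0 < rA := fun h => hrAdef ▸ hspos A h
  have hAneg : 0 < A → rA < 0 := fun h => hrAdef ▸ hsneg A h
  have hBpos : B < 0 → 0 < rB := fun h => hrBdef ▸ hspos B h
  have hBneg : 0 < B → rB < 0 := fun h => hrBdef ▸ hsneg B h
  have hCpos : C < 0 → 0 < rC := fun h => hrCdef ▸ hspos C h
  have hCneg : 0 < C → rC < 0 := fun h => hrCdef ▸ hsneg C h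
  -- rewrite the goal bases in terms of rA, rB, rC, R
  rw [hbase A hA, hbase B hB, hbase C hC, ← hrAdef, ← hrBdef, ← hrCdef]
  have hIII : ∀ a b c : ℝ, ((a:ℂ)*Complex.I) * ((b:ℂ)*Complex.I) * ((c:ℂ)*Complex.I)
      = ((-(a*b*c):ℝ):ℂ)*Complex.I := by
    intro a b c
    have h3 : (Complex.I:ℂ)^3 = -Complex.I := by rw [pow_succ, Complex.I_sq]; ring
    push_cast
    calc ((a:ℂ)*Complex.I) * ((b:ℂ)*Complex.I) * ((c:ℂ)*Complex.I)
        = ((a:ℂ)*(b:ℂ)*(c:ℂ))*Complex.I^3 := by ring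
      _ = -((a:ℂ)*(b:ℂ)*(c:ℂ))*Complex.I := by rw [h3]; ring
  have hsplit : ((m : ℂ) ^ 3 / ((2 * (π : ℂ) * Complex.I * (ℏ : ℂ)) ^ 3 *
      (A : ℂ) * (B : ℂ) * (C : ℂ)))
      = ((m:ℂ) / (2 * (π:ℂ) * Complex.I * (ℏ:ℂ) * (A:ℂ)))
        * ((m:ℂ) / (2 * (π:ℂ) * Complex.I * (ℏ:ℂ) * (B:ℂ)))
        * ((m:ℂ) / (2 * (π:ℂ) * Complex.I * (ℏ:ℂ) * (C:ℂ))) := by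
    rw [div_mul_div_comm, div_mul_div_comm]
    congr 1
    · ring
    · ring
  have hPbase : ((m : ℂ) ^ 3 / ((2 * (π : ℂ) * Complex.I * (ℏ : ℂ)) ^ 3 *
      (A : ℂ) * (B : ℂ) * (C : ℂ))) = ((R:ℝ):ℂ) * Complex.I := by
    rw [hsplit, hbase A hA, hbase B hB, hbase C hC, hIII, ← hrAdef, ← hrBdef, ← hrCdef, ← hRdef]
  rw [hPbase]
  clear_value A B C rA rB rC R
  clear hrAdef hrBdef hrCdef hAdef hBdef hCdef
  have hzA : ((rA:ℂ)*Complex.I) ≠ 0 := mul_ne_zero (Complex.ofReal_ne_zero.2 hrA) Complex.I_ne_zero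
  have hzB : ((rB:ℂ)*Complex.I) ≠ 0 := mul_ne_zero (Complex.ofReal_ne_zero.2 hrB) Complex.I_ne_zero
  have hzC : ((rC:ℂ)*Complex.I) ≠ 0 := mul_ne_zero (Complex.ofReal_ne_zero.2 hrC) Complex.I_ne_zero
  have hzR : ((R:ℂ)*Complex.I) ≠ 0 := mul_ne_zero (Complex.ofReal_ne_zero.2 hR) Complex.I_ne_zero
  have hlogsum : Complex.log ((R:ℂ)*Complex.I)
      = Complex.log ((rA:ℂ)*Complex.I) + Complex.log ((rB:ℂ)*Complex.I) + Complex.log ((rC:ℂ)*Complex.I) := by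
    rw [log_real_mul_I _ hR, log_real_mul_I _ hrA, log_real_mul_I _ hrB, log_real_mul_I _ hrC]
    have h1 : Real.log |R| = Real.log |rA| + Real.log |rB| + Real.log |rC| := by
      rw [hRdef, abs_neg, abs_mul, abs_mul,
        Real.log_mul (by positivity) (abs_ne_zero.2 hrC),
        Real.log_mul (abs_ne_zero.2 hrA) (abs_ne_zero.2 hrB)]
    have h2 : (if 0 < R then (π/2:ℝ) else -(π/2))
        = (if 0 < rA then (π/2:ℝ) else -(π/2)) + (if 0 < rB then (π/2:ℝ) else -(π/2))
          + (if 0 < rC then (π/2:ℝ) else -(π/2)) := by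
      rcases hA.lt_or_gt with hA1 | hA1 <;> rcases hB.lt_or_gt with hB1 | hB1 <;>
        rcases hC.lt_or_gt with hC1 | hC1
      · linarith
      · have haA := hApos hA1; have haB := hBpos hB1; have haC := hCneg hC1
        have hRpos : 0 < R := by
          rw [hRdef]; nlinarith [mul_pos haA haB, mul_pos (mul_pos haA haB) (neg_pos.2 haC)]
        rw [if_pos hRpos, if_pos haA, if_pos haB, if_neg (not_lt.2 haC.le)]; ring
      · have haA := hApos hA1; have haB := hBneg hB1; have haC := hCpos hC1
        have hRpos : 0 < R := by
          rw [hRdef]; nlinarith [mul_pos haA haC, mul_pos (mul_pos haA haC) (neg_pos.2 haB)]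
        rw [if_pos hRpos, if_pos haA, if_neg (not_lt.2 haB.le), if_pos haC]; ring
      · have haA := hApos hA1; have haB := hBneg hB1; have haC := hCneg hC1
        have hRneg : R < 0 := by
          rw [hRdef]; nlinarith [mul_pos (neg_pos.2 haB) (neg_pos.2 haC),
            mul_pos haA (mul_pos (neg_pos.2 haB) (neg_pos.2 haC))]
        rw [if_neg (not_lt.2 hRneg.le), if_pos haA, if_neg (not_lt.2 haB.le),
          if_neg (not_lt.2 haC.le)]; ring
      · have haA := hAneg hA1; have haB := hBpos hB1; have haC := hCpos hC1
        have hRpos : 0 < R := by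
          rw [hRdef]; nlinarith [mul_pos haB haC, mul_pos (mul_pos haB haC) (neg_pos.2 haA)]
        rw [if_pos hRpos, if_neg (not_lt.2 haA.le), if_pos haB, if_pos haC]; ring
      · have haA := hAneg hA1; have haB := hBpos hB1; have haC := hCneg hC1
        have hRneg : R < 0 := by
          rw [hRdef]; nlinarith [mul_pos (neg_pos.2 haA) (neg_pos.2 haC),
            mul_pos haB (mul_pos (neg_pos.2 haA) (neg_pos.2 haC))]
        rw [if_neg (not_lt.2 hRneg.le), if_neg (not_lt.2 haA.le), if_pos haB,
          if_neg (not_lt.2 haC.le)]; ring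
      · have haA := hAneg hA1; have haB := hBneg hB1; have haC := hCpos hC1
        have hRneg : R < 0 := by
          rw [hRdef]; nlinarith [mul_pos (neg_pos.2 haA) (neg_pos.2 haB),
            mul_pos haC (mul_pos (neg_pos.2 haA) (neg_pos.2 haB))]
        rw [if_neg (not_lt.2 hRneg.le), if_neg (not_lt.2 haA.le), if_neg (not_lt.2 haB.le),
          if_pos haC]; ring
      · linarith
    rw [h1]
    simp only [← apply_ite (fun r : ℝ => (r:ℂ))]
    rw [h2]
    push_cast
    ring
  have hA' : (A:ℂ) ≠ 0 := Complex.ofReal_ne_zero.2 hA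
  have hB' : (B:ℂ) ≠ 0 := Complex.ofReal_ne_zero.2 hB
  have hℏ' : (ℏ:ℂ) ≠ 0 := Complex.ofReal_ne_zero.2 hℏ.ne'
  have hCval : C = -A - B := by linarith
  have hC2 : ((C:ℝ):ℂ) = -((A:ℝ):ℂ) - ((B:ℝ):ℂ) := by rw [hCval]; push_cast; ring
  have hC3 : -((A:ℝ):ℂ) - ((B:ℝ):ℂ) ≠ 0 := hC2 ▸ Complex.ofReal_ne_zero.2 hC
  have hC' : (C:ℂ) ≠ 0 := Complex.ofReal_ne_zero.2 hC
  have hABCc : ((A:ℝ):ℂ) + ((B:ℝ):ℂ) + ((C:ℝ):ℂ) = 0 := by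
    have := congrArg (fun r : ℝ => (r:ℂ)) hABC
    push_cast at this
    simpa using this
  have h1 : (2 * (ℏ:ℂ) * ((A:ℝ):ℂ)) ≠ 0 := by simp [hA', hℏ']
  have h2 : (2 * (ℏ:ℂ) * ((B:ℝ):ℂ)) ≠ 0 := by simp [hB', hℏ']
  have h3 : (2 * (ℏ:ℂ) * ((C:ℝ):ℂ)) ≠ 0 := by simp [hC', hℏ']
  have h4 : (((A:ℝ):ℂ) * ((B:ℝ):ℂ) * ((C:ℝ):ℂ)) ≠ 0 := by simp [hA', hB', hC']
  have h5 : (2 * (ℏ:ℂ)) ≠ 0 := by simp [hℏ']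
  have hexp : Complex.I * (m:ℂ) / (2 * (ℏ:ℂ) * (A:ℂ)) * ((x₁:ℂ) - (x₂:ℂ))^2
      + Complex.I * (m:ℂ) / (2 * (ℏ:ℂ) * (B:ℂ)) * ((x₂:ℂ) - (x₃:ℂ))^2
      + Complex.I * (m:ℂ) / (2 * (ℏ:ℂ) * (C:ℂ)) * ((x₃:ℂ) - (x₁:ℂ))^2
      = -(Complex.I * (m:ℂ) / (2 * (ℏ:ℂ))) *
          (((x₁ * B + x₂ * C + x₃ * A : ℝ) : ℂ)) ^ 2 / ((A:ℂ) * (B:ℂ) * (C:ℂ)) := by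
    have hfact : Complex.I * (m:ℂ) / (2 * (ℏ:ℂ) * (A:ℂ)) * ((x₁:ℂ) - (x₂:ℂ))^2
        + Complex.I * (m:ℂ) / (2 * (ℏ:ℂ) * (B:ℂ)) * ((x₂:ℂ) - (x₃:ℂ))^2
        + Complex.I * (m:ℂ) / (2 * (ℏ:ℂ) * (C:ℂ)) * ((x₃:ℂ) - (x₁:ℂ))^2
        = -(Complex.I * (m:ℂ) / (2 * (ℏ:ℂ))) *
            (((x₁ * B + x₂ * C + x₃ * A : ℝ) : ℂ)) ^ 2 / ((A:ℂ) * (B:ℂ) * (C:ℂ))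
          + (Complex.I * (m:ℂ) / (2 * (ℏ:ℂ))) *
            ((((A:ℝ):ℂ) + ((B:ℝ):ℂ) + ((C:ℝ):ℂ)) *
              ((x₁:ℂ)^2*(B:ℂ) + (x₂:ℂ)^2*(C:ℂ) + (x₃:ℂ)^2*(A:ℂ)))
            / ((A:ℂ) * (B:ℂ) * (C:ℂ)) := by
      push_cast
      field_simp
      ring
    rw [hfact, hABCc]
    ring
  rw [Complex.cpow_def_of_ne_zero hzA, Complex.cpow_def_of_ne_zero hzB,
    Complex.cpow_def_of_ne_zero hzC, Complex.cpow_def_of_ne_zero hzR, hlogsum, ← hexp]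
  simp only [← Complex.exp_add]
  congr 1
  ring

/-- `K₃` equals `(m³/((2πiℏ)³T₂₁T₃₂T₁₃))^{1/2} exp[−(im/(2ℏ))(x₁T₃₂+x₂T₁₃+x₃T₂₁)²/(T₂₁T₃₂T₁₃)]`
(`T_{kl} := t_k − t_l`), and — since `x₁T₃₂+x₂T₁₃+x₃T₂₁` is twice the signed area of the
triangle with vertices `(x_k,t_k)` — `K₃` is invariant under all Galilean transformations
`(x,t) ↦ (x + vt + x₀, t + t₀)`. -/
theorem K3free_eq_and_galilei_invariant
    (m ℏ : ℝ) (hm : 0 < m) (hℏ : 0 < ℏ)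
    (x₁ x₂ x₃ t₁ t₂ t₃ : ℝ)
    (h12 : t₁ ≠ t₂) (h23 : t₂ ≠ t₃) (h13 : t₁ ≠ t₃) :
    K3free m ℏ x₁ x₂ x₃ t₁ t₂ t₃
      = ((m : ℂ) ^ 3 / ((2 * (π : ℂ) * Complex.I * (ℏ : ℂ)) ^ 3 *
            ((t₂ - t₁ : ℝ) : ℂ) * ((t₃ - t₂ : ℝ) : ℂ) * ((t₁ - t₃ : ℝ) : ℂ))) ^ ((1 : ℂ) / 2) *
        Complex.exp (-(Complex.I * (m : ℂ) / (2 * (ℏ : ℂ))) *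
          (((x₁ * (t₃ - t₂) + x₂ * (t₁ - t₃) + x₃ * (t₂ - t₁) : ℝ) : ℂ)) ^ 2 /
          (((t₂ - t₁ : ℝ) : ℂ) * ((t₃ - t₂ : ℝ) : ℂ) * ((t₁ - t₃ : ℝ) : ℂ))) ∧
    (∀ v x₀ t₀ : ℝ,
      K3free m ℏ (x₁ + v * t₁ + x₀) (x₂ + v * t₂ + x₀) (x₃ + v * t₃ + x₀)
          (t₁ + t₀) (t₂ + t₀) (t₃ + t₀)
        = K3free m ℏ x₁ x₂ x₃ t₁ t₂ t₃) := by
  refine ⟨K3free_eq m ℏ hm hℏ x₁ x₂ x₃ t₁ t₂ t₃ h12 h23 h13, fun v x₀ t₀ => ?_⟩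
  have h12' : t₁ + t₀ ≠ t₂ + t₀ := by intro h; apply h12; linarith
  have h23' : t₂ + t₀ ≠ t₃ + t₀ := by intro h; apply h23; linarith
  have h13' : t₁ + t₀ ≠ t₃ + t₀ := by intro h; apply h13; linarith
  rw [K3free_eq m ℏ hm hℏ _ _ _ _ _ _ h12' h23' h13',
    K3free_eq m ℏ hm hℏ x₁ x₂ x₃ t₁ t₂ t₃ h12 h23 h13]
  have e1 : t₂ + t₀ - (t₁ + t₀) = t₂ - t₁ := by ring
  have e2 : t₃ + t₀ - (t₂ + t₀) = t₃ - t₂ := by ring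
  have e3 : t₁ + t₀ - (t₃ + t₀) = t₁ - t₃ := by ring
  have eS : (x₁ + v * t₁ + x₀) * (t₃ + t₀ - (t₂ + t₀)) + (x₂ + v * t₂ + x₀) * (t₁ + t₀ - (t₃ + t₀))
      + (x₃ + v * t₃ + x₀) * (t₂ + t₀ - (t₁ + t₀))
      = x₁ * (t₃ - t₂) + x₂ * (t₁ - t₃) + x₃ * (t₂ - t₁) := by ring
  rw [eS, e1, e2, e3]
end

section
/- For the free particle on ℝ with propagator K(x'',x';T) as above, define K₄ := K(x₂',x₁;T₁₂)K(x₁,x₂;T₂₁)K(x₂,x₃;T₃₂)K(x₃,x₂';T₂₃). Then K₄ = (2πℏ|T₁₃|/m) · K₃(x₁,x₂,x₃;t₁,t₂,t₃) · conj(K₃(x₁,x₂',x₃;t₁,t₂,t₃)), where T_{kl} = t_k − t_l. -/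
open Real

lemma Kfree_symm (m ℏ a b T : ℝ) : Kfree m ℏ a b T = Kfree m ℏ b a T := by
  unfold Kfree; ring_nf

lemma Kfree_zval (m ℏ T : ℝ) (hℏ : ℏ ≠ 0) (hT : T ≠ 0) :
    (m : ℂ) / (2 * (π : ℂ) * Complex.I * (ℏ : ℂ) * (T : ℂ)) =
      ((-(m / (2 * π * ℏ * T)) : ℝ) : ℂ) * Complex.I := by
  have hπ : (π : ℂ) ≠ 0 := Complex.ofReal_ne_zero.2 pi_ne_zero
  have hℏ' : (ℏ : ℂ) ≠ 0 := Complex.ofReal_ne_zero.2 hℏ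
  have hT' : (T : ℂ) ≠ 0 := Complex.ofReal_ne_zero.2 hT
  have hI : Complex.I ≠ 0 := Complex.I_ne_zero
  push_cast
  field_simp
  ring_nf
  simp [Complex.I_sq]

lemma Kfree_arg_ne (m ℏ T : ℝ) (hm : 0 < m) (hℏ : 0 < ℏ) (hT : T ≠ 0) :
    ((m : ℂ) / (2 * (π : ℂ) * Complex.I * (ℏ : ℂ) * (T : ℂ))).arg ≠ π := by
  rw [Kfree_zval m ℏ T hℏ.ne' hT]
  intro h
  rw [Complex.arg_eq_pi_iff] at h
  have him : ((m:ℂ) / (2*(π:ℂ)*(ℏ:ℂ)*(T:ℂ))).im = 0 := by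
    simp [Complex.div_im]
  have h1 := h.1
  simp [him] at h1

lemma conj_Kfree (m ℏ : ℝ) (hm : 0 < m) (hℏ : 0 < ℏ) (a b T : ℝ) (hT : T ≠ 0) :
    (starRingEnd ℂ) (Kfree m ℏ a b T) = Kfree m ℏ a b (-T) := by
  unfold Kfree
  rw [map_mul]
  congr 1
  · have h12 : (starRingEnd ℂ) ((1 : ℂ)/2) = (1 : ℂ)/2 := by
      simp [map_ofNat]
    rw [show ((m : ℂ) / (2 * (π : ℂ) * Complex.I * (ℏ : ℂ) * (T : ℂ))) ^ ((1:ℂ)/2)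
        = ((m : ℂ) / (2 * (π : ℂ) * Complex.I * (ℏ : ℂ) * (T : ℂ))) ^
          ((starRingEnd ℂ) ((1:ℂ)/2)) from by rw [h12]]
    rw [← Complex.conj_cpow _ _ (Kfree_arg_ne m ℏ T hm hℏ hT)]
    congr 1
    · rw [Kfree_zval m ℏ T hℏ.ne' hT, Kfree_zval m ℏ (-T) hℏ.ne' (neg_ne_zero.2 hT)]
      simp [map_mul, map_div₀, map_ofNat, Complex.conj_I, div_neg]
  · rw [← Complex.exp_conj]
    congr 1
    simp [map_mul, map_div₀, map_ofNat, Complex.conj_I, Complex.ofReal_neg, div_neg, map_pow, map_sub]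
    ring

lemma Kfree_mul_neg (m ℏ : ℝ) (hm : 0 < m) (hℏ : 0 < ℏ) (a b T : ℝ) (hT : T ≠ 0) :
    Kfree m ℏ a b T * Kfree m ℏ a b (-T) = ((m / (2 * π * ℏ * |T|) : ℝ) : ℂ) := by
  rw [← conj_Kfree m ℏ hm hℏ a b T hT, Complex.mul_conj, Complex.normSq_eq_norm_sq]
  congr 1
  have hzeq := Kfree_zval m ℏ T hℏ.ne' hT
  have hc : m / (2 * π * ℏ * T) ≠ 0 := by
    apply div_ne_zero hm.ne'
    exact mul_ne_zero (mul_ne_zero (mul_ne_zero two_ne_zero pi_ne_zero) hℏ.ne') hT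
  have hz0 : (m:ℂ)/(2*(π:ℂ)*Complex.I*(ℏ:ℂ)*(T:ℂ)) ≠ 0 := by
    rw [hzeq]
    apply mul_ne_zero _ Complex.I_ne_zero
    simpa using hc
  have habs : ‖(m:ℂ)/(2*(π:ℂ)*Complex.I*(ℏ:ℂ)*(T:ℂ))‖ = m/(2*π*ℏ*|T|) := by
    rw [hzeq, norm_mul, Complex.norm_I, Complex.norm_real, Real.norm_eq_abs, mul_one, abs_neg, abs_div,
      abs_of_pos hm]
    congr 1
    rw [abs_mul, abs_mul, abs_of_pos (by positivity : (0:ℝ) < 2 * π), abs_of_pos hℏ]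
  have hbase : 0 < m/(2*π*ℏ*|T|) := by
    have : 0 < |T| := abs_pos.2 hT
    positivity
  unfold Kfree
  rw [norm_mul, show ((1:ℂ)/2) = (((1/2:ℝ)):ℂ) from by norm_num, Complex.norm_cpow_real, habs]
  have hexp : ‖(Complex.exp (Complex.I * (m : ℂ) / (2 * (ℏ : ℂ) * (T : ℂ)) *
      ((a : ℂ) - (b : ℂ)) ^ 2))‖ = 1 := by
    rw [show Complex.I * (m : ℂ) / (2 * (ℏ : ℂ) * (T : ℂ)) * ((a : ℂ) - (b : ℂ)) ^ 2
        = ((m / (2 * ℏ * T) * (a - b) ^ 2 : ℝ) : ℂ) * Complex.I from by push_cast; ring]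
    exact Complex.norm_exp_ofReal_mul_I _
  rw [hexp, mul_one]
  rw [← Real.rpow_natCast _ 2, ← Real.rpow_mul hbase.le]
  norm_num

/-- `K₄ := K(x₂',x₁;T₁₂)K(x₁,x₂;T₂₁)K(x₂,x₃;T₃₂)K(x₃,x₂';T₂₃)` satisfies
`K₄ = (2πℏ|T₁₃|/m) · K₃(x₁,x₂,x₃) · conj(K₃(x₁,x₂',x₃))`, where `T_{kl} = t_k − t_l`. -/
theorem K4_eq_K3_mul_conj_K3
    (m ℏ : ℝ) (hm : 0 < m) (hℏ : 0 < ℏ)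
    (x₁ x₂ x₃ x₂' t₁ t₂ t₃ : ℝ)
    (h12 : t₁ ≠ t₂) (h23 : t₂ ≠ t₃) (h13 : t₁ ≠ t₃) :
    Kfree m ℏ x₂' x₁ (t₁ - t₂) * Kfree m ℏ x₁ x₂ (t₂ - t₁) *
        Kfree m ℏ x₂ x₃ (t₃ - t₂) * Kfree m ℏ x₃ x₂' (t₂ - t₃)
      = ((2 * π * ℏ * |t₁ - t₃| / m : ℝ) : ℂ) *
          K3free m ℏ x₁ x₂ x₃ t₁ t₂ t₃ *
          (starRingEnd ℂ) (K3free m ℏ x₁ x₂' x₃ t₁ t₂ t₃) := by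
  have h21 : t₂ - t₁ ≠ 0 := sub_ne_zero.2 (Ne.symm h12)
  have h32 : t₃ - t₂ ≠ 0 := sub_ne_zero.2 (Ne.symm h23)
  have hT13 : t₁ - t₃ ≠ 0 := sub_ne_zero.2 h13
  unfold K3free
  rw [map_mul, map_mul, conj_Kfree m ℏ hm hℏ _ _ _ h21, conj_Kfree m ℏ hm hℏ _ _ _ h32,
    conj_Kfree m ℏ hm hℏ _ _ _ hT13]
  rw [Kfree_symm m ℏ x₂' x₁, Kfree_symm m ℏ x₃ x₂']
  rw [show t₁ - t₂ = -(t₂ - t₁) from by ring, show t₂ - t₃ = -(t₃ - t₂) from by ring]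
  have key := Kfree_mul_neg m ℏ hm hℏ x₃ x₁ (t₁ - t₃) hT13
  have habs : |t₁ - t₃| ≠ 0 := abs_ne_zero.2 hT13
  have hsr : (2 * π * ℏ * |t₁ - t₃| / m) * (m / (2 * π * ℏ * |t₁ - t₃|)) = 1 := by
    field_simp
  calc Kfree m ℏ x₁ x₂' (-(t₂ - t₁)) * Kfree m ℏ x₁ x₂ (t₂ - t₁) *
        Kfree m ℏ x₂ x₃ (t₃ - t₂) * Kfree m ℏ x₂' x₃ (-(t₃ - t₂))
      = Kfree m ℏ x₁ x₂' (-(t₂ - t₁)) * Kfree m ℏ x₁ x₂ (t₂ - t₁) *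
        Kfree m ℏ x₂ x₃ (t₃ - t₂) * Kfree m ℏ x₂' x₃ (-(t₃ - t₂)) *
        (((2 * π * ℏ * |t₁ - t₃| / m : ℝ) : ℂ) * ((m / (2 * π * ℏ * |t₁ - t₃|) : ℝ) : ℂ)) := by
        rw [← Complex.ofReal_mul, hsr, Complex.ofReal_one, mul_one]
    _ = ((2 * π * ℏ * |t₁ - t₃| / m : ℝ) : ℂ) *
        (Kfree m ℏ x₁ x₂ (t₂ - t₁) * Kfree m ℏ x₂ x₃ (t₃ - t₂) * Kfree m ℏ x₃ x₁ (t₁ - t₃)) *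
        (Kfree m ℏ x₁ x₂' (-(t₂ - t₁)) * Kfree m ℏ x₂' x₃ (-(t₃ - t₂)) *
          Kfree m ℏ x₃ x₁ (-(t₁ - t₃))) := by
        rw [← key]; ring
end

section
/- Let V be a finite-dimensional real symplectic vector space with symplectic form σ, and let B = C_{f₁,...,f_k}(S) := {g ∈ V | (σ(f₁,g),...,σ(f_k,g)) ∈ S}, where f₁,...,f_k ∈ V are linearly independent, pairwise σ-orthogonal, S ⊆ ℝ^k is a Borel set, and the invariance group of S in ℝ^k is trivial (Inv_{ℝᵏ}(S) = {0}). Then Inv_V(B) := {v ∈ V | B + rv = B for all r ∈ ℝ} equals {f₁,...,f_k}^⊥ = {v ∈ V | σ(f_j, v) = 0 for all j}, and in particular Inv_V(B) is coisotropic. -/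
open Module

/-- The invariance group `Inv(B) = {v | B + rv = B for all r ∈ ℝ}` of a subset `B` of a
real vector space. -/
def InvSet {M : Type*} [AddCommGroup M] [Module ℝ M] (B : Set M) : Set M :=
  {v | ∀ r : ℝ, (fun x => x + r • v) '' B = B}

/-- For `B = C_{f₁,…,f_k}(S) = {g | (σ(f₁,g),…,σ(f_k,g)) ∈ S}` with `f₁,…,f_k` linearly
independent and pairwise `σ`-orthogonal and `S` Borel with trivial invariance group,
`Inv_V(B)` equals `{f₁,…,f_k}^⊥ = {v | σ(f_j,v) = 0 ∀j}`; in particular `Inv_V(B)` is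
coisotropic. -/
theorem invSet_of_observable_is_coisotropic
    {V : Type*} [AddCommGroup V] [Module ℝ V] [FiniteDimensional ℝ V]
    (σ : V →ₗ[ℝ] V →ₗ[ℝ] ℝ)
    (halt : ∀ v, σ v v = 0)
    (hnd : ∀ v, (∀ w, σ v w = 0) → v = 0)
    (k : ℕ) (f : Fin k → V)
    (hf : LinearIndependent ℝ f)
    (horth : ∀ i j, σ (f i) (f j) = 0)
    (S : Set (Fin k → ℝ)) (hS : MeasurableSet S)
    (hSinv : InvSet S = {0}) :
    InvSet {g : V | (fun j => σ (f j) g) ∈ S}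
        = ↑(⨅ j, LinearMap.ker (σ (f j))) ∧
      sympOrth σ (⨅ j, LinearMap.ker (σ (f j))) ≤ ⨅ j, LinearMap.ker (σ (f j)) := by
  classical
  set W : Submodule ℝ V := ⨅ j, LinearMap.ker (σ (f j)) with hWdef
  have hmemW : ∀ v : V, v ∈ W ↔ ∀ j, σ (f j) v = 0 := by
    intro v
    simp [hWdef, Submodule.mem_iInf, LinearMap.mem_ker]
  set T : V →ₗ[ℝ] (Fin k → ℝ) := LinearMap.pi (fun j => σ (f j)) with hTdef
  have hT : ∀ g : V, T g = fun j => σ (f j) g := fun _ => rfl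
  -- surjectivity of T
  have hTsurj : Function.Surjective T := by
    rw [← LinearMap.range_eq_top]
    by_contra hne
    obtain ⟨φ, hφne, hφ⟩ :=
      Submodule.exists_dual_map_eq_bot_of_lt_top (lt_top_iff_ne_top.mpr hne) inferInstance
    have hps : ∀ i : Fin k, (Pi.single i 1 : Fin k → ℝ) = fun j => if i = j then 1 else 0 :=
      fun i => funext fun j => by rw [Pi.single_apply]; simp [eq_comm]
    set a : Fin k → ℝ := fun j => φ (Pi.single j 1) with ha
    have hzero : ∀ g : V, φ (T g) = 0 := by
      intro g
      have : φ (T g) ∈ (LinearMap.range T).map φ :=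
        Submodule.mem_map_of_mem (LinearMap.mem_range_self T g)
      rw [hφ] at this
      simpa using this
    have hsum : (∑ j, a j • f j) = 0 := by
      apply hnd
      intro w
      have h1 := hzero w
      rw [LinearMap.pi_apply_eq_sum_univ φ (T w)] at h1
      simpa [ha, hT, map_sum, LinearMap.sum_apply, LinearMap.map_smul,
        LinearMap.smul_apply, smul_eq_mul, hps, mul_comm] using h1
    have haz : ∀ j, a j = 0 := Fintype.linearIndependent_iff.mp hf a hsum
    apply hφne
    apply LinearMap.ext
    intro x
    rw [LinearMap.pi_apply_eq_sum_univ φ x]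
    have haz' : ∀ j, φ (Pi.single j 1) = 0 := haz
    simp only [← hps, haz', mul_zero, smul_eq_mul, Finset.sum_const_zero, LinearMap.zero_apply]
  set B : Set V := {g : V | (fun j => σ (f j) g) ∈ S} with hBdef
  have hBpre : B = T ⁻¹' S := by ext g; simp [hBdef, hT]
  constructor
  · ext v
    constructor
    · intro hv
      have hc : T v ∈ InvSet S := by
        intro r
        have h1 := hv r
        have h3 : T '' B = S := by rw [hBpre, Set.image_preimage_eq S hTsurj]
        calc (fun y => y + r • T v) '' S
            = (fun y => y + r • T v) '' (T '' B) := by rw [h3]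
          _ = T '' ((fun x => x + r • v) '' B) := by
              rw [← Set.image_comp, ← Set.image_comp]
              exact (Set.image_congr fun x _ => by
                simp [Function.comp, map_add, map_smul]).symm
          _ = T '' B := by rw [h1]
          _ = S := h3
      rw [hSinv] at hc
      rw [SetLike.mem_coe, hmemW]
      intro j
      have := congrFun hc j
      simpa [hT] using this
    · intro hv
      rw [SetLike.mem_coe, hmemW] at hv
      have hTv : T v = 0 := by ext j; simp [hT, hv j]
      intro r
      have hfix : ∀ x : V, T (x + r • v) = T x := by
        intro x; rw [map_add, map_smul, hTv, smul_zero, add_zero]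
      apply Set.Subset.antisymm
      · rintro y ⟨x, hx, rfl⟩
        rw [hBpre, Set.mem_preimage] at hx ⊢
        rwa [hfix]
      · intro y hy
        refine ⟨y - r • v, ?_, by simp⟩
        rw [hBpre, Set.mem_preimage] at hy ⊢
        have : T (y - r • v) = T y := by
          rw [map_sub, map_smul, hTv, smul_zero, sub_zero]
        rwa [this]
  · -- coisotropy
    have hrefl : LinearMap.IsRefl σ := LinearMap.IsAlt.isRefl halt
    have hspan : W = LinearMap.BilinForm.orthogonal σ (Submodule.span ℝ (Set.range f)) := by
      ext v
      rw [hmemW, LinearMap.BilinForm.mem_orthogonal_iff]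
      constructor
      · intro h n hn
        induction hn using Submodule.span_induction with
        | mem x hx => obtain ⟨j, rfl⟩ := hx; exact h j
        | zero => simp [LinearMap.BilinForm.IsOrtho]
        | add x y _ _ hx hy =>
          simp [hx, hy]
        | smul c x _ hx =>
          simp [hx]
      · intro h j
        exact h (f j) (Submodule.subset_span ⟨j, rfl⟩)
    have hndB : LinearMap.BilinForm.Nondegenerate σ := hrefl.nondegenerate_iff_separatingLeft.mpr hnd
    have hkey : LinearMap.BilinForm.orthogonal σ W = Submodule.span ℝ (Set.range f) := by
      rw [hspan, LinearMap.BilinForm.orthogonal_orthogonal hndB hrefl]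
    intro v hv
    have hv' : v ∈ LinearMap.BilinForm.orthogonal σ W := by
      rw [LinearMap.BilinForm.mem_orthogonal_iff]
      intro n hn
      exact hrefl v n (hv n hn)
    rw [hkey] at hv'
    have hle : Submodule.span ℝ (Set.range f) ≤ W := by
      rw [Submodule.span_le]
      rintro x ⟨i, rfl⟩
      rw [SetLike.mem_coe, hmemW]
      exact fun j => horth j i
    exact hle hv'
end

section
/- Let V be a finite-dimensional real symplectic vector space and B ⊆ V a Borel set such that W := Inv_V(B) = {v ∈ V | B + rv = B for all r ∈ ℝ} is coisotropic. Let f₁,...,f_k be a basis of W^⊥ and define S := {(σ(f₁,v),...,σ(f_k,v)) | v ∈ B} ⊆ ℝ^k. Then B = C_{f₁,...,f_k}(S) := {v ∈ V | (σ(f₁,v),...,σ(f_k,v)) ∈ S}. -/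
open Module

/-- If `B ⊆ V` is a Borel set whose invariance group `W = Inv_V(B)` is a coisotropic
subspace, and `f₁,…,f_k` is a basis of `W^⊥`, then with
`S := {(σ(f₁,v),…,σ(f_k,v)) | v ∈ B}` one has `B = C_{f₁,…,f_k}(S)`. -/
theorem observable_set_eq_C_of_coisotropic_inv
    {V : Type*} [AddCommGroup V] [Module ℝ V] [FiniteDimensional ℝ V]
    [TopologicalSpace V] [MeasurableSpace V] [BorelSpace V]
    (σ : V →ₗ[ℝ] V →ₗ[ℝ] ℝ)
    (halt : ∀ v, σ v v = 0)
    (hnd : ∀ v, (∀ w, σ v w = 0) → v = 0)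
    (B : Set V) (hB : MeasurableSet B)
    (W : Submodule ℝ V) (hW : (↑W : Set V) = InvSet B)
    (hco : sympOrth σ W ≤ W)
    (k : ℕ) (b : Basis (Fin k) ℝ ↥(sympOrth σ W)) :
    B = {v : V | (fun j => σ ((b j : V)) v)
          ∈ {y : Fin k → ℝ | ∃ v' ∈ B, y = fun j => σ ((b j : V)) v'}} := by
  have hskew : ∀ x y : V, σ x y = -σ y x := by
    intro x y
    have h := halt (x + y)
    simp only [map_add, LinearMap.add_apply, halt] at h
    linarith
  have hrefl : LinearMap.BilinForm.IsRefl σ := by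
    intro x y h; rw [hskew, h, neg_zero]
  have hndB : LinearMap.BilinForm.Nondegenerate σ :=
    ⟨hnd, fun y hy => hnd y (fun x => by rw [hskew, hy, neg_zero])⟩
  -- identify sympOrth with BilinForm.orthogonal
  have hOrth : sympOrth σ W = LinearMap.BilinForm.orthogonal σ W := by
    ext x
    constructor
    · intro hx g hg
      have := hx g hg
      rw [hskew, this, neg_zero]
    · intro hx g hg
      have := hx g hg
      rw [hskew, this, neg_zero]
  ext v
  constructor
  · intro hv
    exact ⟨v, hv, rfl⟩
  · rintro ⟨v', hv', hy⟩
    -- σ (b j) v = σ (b j) v' for all j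
    have hzero : ∀ j, σ ((b j : V)) (v - v') = 0 := by
      intro j
      have := congrFun hy j
      simp only [map_sub]
      linarith [congrFun hy j]
    -- hence σ f (v - v') = 0 for all f in sympOrth σ W
    have hall : ∀ f ∈ sympOrth σ W, σ f (v - v') = 0 := by
      intro f hf
      let g : ↥(sympOrth σ W) →ₗ[ℝ] ℝ :=
        (σ.flip (v - v')).comp (sympOrth σ W).subtype
      have hg : g = 0 := by
        apply b.ext
        intro j
        simpa [g] using hzero j
      have := congrFun (congrArg DFunLike.coe hg) ⟨f, hf⟩
      simpa [g] using this
    -- so v - v' ∈ (sympOrth σ W)^⊥ = W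
    have hw : v - v' ∈ W := by
      have : v - v' ∈ LinearMap.BilinForm.orthogonal σ (sympOrth σ W) := by
        intro n hn
        have := hall n hn
        rw [this]
      rw [hOrth, LinearMap.BilinForm.orthogonal_orthogonal hndB hrefl] at this
      exact this
    -- W = InvSet B, so translating by v - v' preserves B
    have hinv : v - v' ∈ InvSet B := by rw [← hW]; exact hw
    have := hinv 1
    rw [← this]
    exact ⟨v', hv', by simp⟩
end
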